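/- Let A be the unilateral right shift on ℓ²(ℕ) (Ae_n = e_{n+1}) and let B be the orthogonal projection with Be_n = e_n for n ≠ 1 and Be_1 = 0. Then A and B are quasihyponormal, but AB is not quasihyponormal. -/

import Mathlib

open ContinuousLinearMap

local notation "H" => lp (fun _ : ℕ => ℂ) 2

open scoped InnerProductSpace in
private lemma vec_ext {x y : lp (fun _ : ℕ => ℂ) 2}
    (h : ∀ n : ℕ, ⟪lp.single 2 n (1 : ℂ), x⟫_ℂ = ⟪lp.single 2 n (1 : ℂ), y⟫_ℂ) : x = y := by
  apply lp.ext
  funext n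
  have := h n
  rw [lp.inner_single_left, lp.inner_single_left] at this
  simpa using this

private lemma clm_ext_single (T S : lp (fun _ : ℕ => ℂ) 2 →L[ℂ] lp (fun _ : ℕ => ℂ) 2)
    (h : ∀ n : ℕ, T (lp.single 2 n (1 : ℂ)) = S (lp.single 2 n (1 : ℂ))) : T = S := by
  refine ContinuousLinearMap.ext fun x => ?_
  have h1 := lp.hasSum_single (E := fun _ : ℕ => ℂ) (by norm_num) x
  have hsmul : ∀ n : ℕ, lp.single (E := fun _ : ℕ => ℂ) 2 n (x n) = x n • lp.single 2 n (1 : ℂ) := by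
    intro n
    rw [← lp.single_smul]
    norm_num
  have hT := h1.mapL T
  have hS := h1.mapL S
  refine hT.unique ?_
  convert hS using 2 with n
  simp only [hsmul, map_smul, h]

open scoped InnerProductSpace in
private lemma norm_single_one (n : ℕ) : ‖lp.single (E := fun _ : ℕ => ℂ) 2 n (1 : ℂ)‖ = 1 := by
  have : ⟪lp.single (E := fun _ : ℕ => ℂ) 2 n (1 : ℂ), lp.single 2 n (1 : ℂ)⟫_ℂ = 1 := by
    rw [lp.inner_single_left, lp.single_apply_self]
    simp
  have h2 := inner_self_eq_norm_sq (𝕜 := ℂ) (lp.single (E := fun _ : ℕ => ℂ) 2 n (1 : ℂ))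
  rw [this] at h2
  simp only [RCLike.one_re] at h2
  nlinarith [norm_nonneg (lp.single (E := fun _ : ℕ => ℂ) 2 n (1 : ℂ))]

set_option maxHeartbeats 1000000 in
open scoped InnerProductSpace in
/-- The unilateral shift A and the projection B killing e₁ on ℓ²(ℕ) are quasihyponormal,
but AB is not quasihyponormal. -/
theorem stmt15 (A B : lp (fun _ : ℕ => ℂ) 2 →L[ℂ] lp (fun _ : ℕ => ℂ) 2)
    (hA : ∀ n : ℕ, A (lp.single 2 n 1) = lp.single 2 (n + 1) 1)
    (hB : ∀ n : ℕ, n ≠ 1 → B (lp.single 2 n 1) = lp.single 2 n 1)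
    (hB1 : B (lp.single 2 1 1) = 0) :
    (∀ x, ‖(adjoint A * A) x‖ ≤ ‖(A ^ 2) x‖) ∧
    (∀ x, ‖(adjoint B * B) x‖ ≤ ‖(B ^ 2) x‖) ∧
    ¬ (∀ x, ‖(adjoint (A * B) * (A * B)) x‖ ≤ ‖((A * B) ^ 2) x‖) := by
  have hsd : ∀ n m : ℕ, ⟪lp.single (E := fun _ : ℕ => ℂ) 2 n (1 : ℂ), lp.single 2 m (1 : ℂ)⟫_ℂ =
      if n = m then 1 else 0 := by
    intro n m
    rw [lp.inner_single_left]
    rcases eq_or_ne n m with h | h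
    · subst h; rw [lp.single_apply_self]; simp
    · rw [lp.single_apply_ne 2 m 1 h]; simp [h]
  -- A† A = 1
  have hAA : adjoint A * A = 1 := by
    apply clm_ext_single
    intro m
    apply vec_ext
    intro n
    rw [mul_apply_eq_comp, adjoint_inner_right, hA, hA, hsd, one_apply_eq_self, hsd]
    simp
  have hAiso : ∀ y : H, ‖A y‖ = ‖y‖ := by
    intro y
    have h1 : ⟪A y, A y⟫_ℂ = ⟪y, y⟫_ℂ := by
      rw [← adjoint_inner_left]
      have : adjoint A (A y) = y := by
        have := congrFun (congrArg DFunLike.coe hAA) y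
        simpa using this
      rw [this]
    have h2 := inner_self_eq_norm_sq (𝕜 := ℂ) (A y)
    have h3 := inner_self_eq_norm_sq (𝕜 := ℂ) y
    rw [h1, h3] at h2
    nlinarith [norm_nonneg (A y), norm_nonneg y]
  -- B† B = B ^ 2
  have hBB : adjoint B * B = B ^ 2 := by
    apply clm_ext_single
    intro m
    apply vec_ext
    intro n
    rw [mul_apply_eq_comp, adjoint_inner_right, pow_two, mul_apply_eq_comp]
    by_cases hm : m = 1
    · subst hm
      rw [hB1]
      simp
    · simp only [hB m hm]
      by_cases hn : n = 1
      · subst hn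
        rw [hB1, hsd, if_neg (by omega)]
        simp
      · rw [hB n hn]
  refine ⟨?_, ?_, ?_⟩
  · intro x
    rw [hAA]
    have : (A ^ 2) x = A (A x) := by rw [pow_two, mul_apply_eq_comp]
    rw [this, hAiso, hAiso]
    simp
  · intro x
    rw [hBB]
  · intro hcon
    have h := hcon (lp.single 2 0 1)
    set T := A * B with hT
    have hT0 : T (lp.single 2 0 1) = lp.single 2 1 1 := by
      rw [hT, mul_apply_eq_comp, hB 0 (by omega), hA]
    have hT2 : (T ^ 2) (lp.single 2 0 1) = 0 := by
      rw [pow_two, mul_apply_eq_comp, hT0, hT, mul_apply_eq_comp, hB1, map_zero]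
    have hlow : (1 : ℝ) ≤ ‖(adjoint T * T) (lp.single 2 0 1)‖ := by
      have hin : ⟪(adjoint T * T) (lp.single 2 0 1), lp.single 2 0 (1 : ℂ)⟫_ℂ = 1 := by
        rw [mul_apply_eq_comp, adjoint_inner_left, hT0, hsd]
        simp
      have := norm_inner_le_norm (𝕜 := ℂ) ((adjoint T * T) (lp.single 2 0 1))
        (lp.single 2 0 (1 : ℂ))
      rw [hin, norm_single_one, norm_one, mul_one] at this
      exact this
    rw [hT2, norm_zero] at h
    linarith
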